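/- Coherent state simulation is in general not transitive: there exists a transducer T and protocol P with states s₁, s₂, s₃ such that s₁ is coherently similar to s₂ and s₂ is coherently similar to s₃ (each pair contained in some coherent simulation), but no coherent simulation contains (s₁, s₃). -/

import Mathlib

/-- A transducer over label alphabet `A`: rounds are subsets of `A`. -/
structure Transducer (A : Type) where
  S : Type
  init : S
  delta : S → Set A → S → Prop

/-- Extension of the transition relation to traces (sequences of rounds). -/
inductive ExtDelta {A : Type} (T : Transducer A) : T.S → List (Set A) → T.S → Prop
  | nil (q : T.S) : ExtDelta T q [] q
  | snoc {s s'' s' : T.S} {t : List (Set A)} {V : Set A} :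
      ExtDelta T s t s'' → T.delta s'' V s' → ExtDelta T s (t ++ [V]) s'

/-- The trace set of a transducer. -/
def traces {A : Type} (T : Transducer A) : Set (List (Set A)) :=
  {t | ∃ s, ExtDelta T T.init t s}

/-- Intersection (synchronized product) of transducers. -/
def inter {A : Type} (T T' : Transducer A) : Transducer A where
  S := T.S × T'.S
  init := (T.init, T'.init)
  delta := fun p V q => T.delta p.1 V q.1 ∧ T'.delta p.2 V q.2

/-- Witness traces reaching a state. -/
def witnessSet {A : Type} (T : Transducer A) (s : T.S) : Set (List (Set A)) :=
  {t | t ∈ traces T ∧ ExtDelta T T.init t s}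

/-- Coherent simulation with respect to protocol `P`. -/
def CoherentSim {A : Type} (T P : Transducer A) (R : Set (T.S × T.S)) : Prop :=
  ∀ s' s'', (s', s'') ∈ R →
    (∀ (V : Set A) (r'' : T.S), T.delta s'' V r'' →
        ∃ r', T.delta s' V r' ∧ (r', r'') ∈ R) ∧
    (∀ V : Set A, (¬ ∃ r'', T.delta s'' V r'') →
        ((¬ ∃ r', T.delta s' V r') ∨ ∀ t ∈ witnessSet T s'', t ++ [V] ∉ traces P))

theorem coherentSim_not_transitive :
    ∃ (T P : Transducer ℕ) (s₁ s₂ s₃ : T.S),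
      (∃ R, CoherentSim T P R ∧ (s₁, s₂) ∈ R) ∧
      (∃ R, CoherentSim T P R ∧ (s₂, s₃) ∈ R) ∧
      ¬ ∃ R, CoherentSim T P R ∧ (s₁, s₃) ∈ R := by
  classical
  -- T: states ℕ, init 0, transitions: 0 →V 3 and 1 →V 1 for every round V.
  refine ⟨⟨ℕ, 0, fun s _ s' => (s = 0 ∧ s' = 3) ∨ (s = 1 ∧ s' = 1)⟩,
    ⟨Unit, (), fun _ _ _ => True⟩, 1, 2, 3, ?_, ?_, ?_⟩
  · -- (1,2): state 2 is unreachable and has no transitions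
    refine ⟨{(1, 2)}, ?_, rfl⟩
    intro s' s'' hmem
    simp only [Set.mem_singleton_iff, Prod.mk.injEq] at hmem
    obtain ⟨rfl, rfl⟩ := hmem
    constructor
    · rintro V r'' (⟨h, _⟩ | ⟨h, _⟩) <;> omega
    · intro V _
      right
      rintro t ⟨_, hext⟩ _
      -- no trace reaches state 2
      have key : ∀ (t : List (Set ℕ)) (a b : ℕ),
          ExtDelta ⟨ℕ, 0, fun s _ s' => (s = 0 ∧ s' = 3) ∨ (s = 1 ∧ s' = 1)⟩ a t b →
          b = a ∨ b = 3 ∨ b = 1 := by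
        intro t a b h
        exact ExtDelta.rec (motive := fun t b _ => b = a ∨ b = (3 : ℕ) ∨ b = (1 : ℕ)) (Or.inl rfl)
          (fun _ hd _ => by rcases hd with ⟨_, rfl⟩ | ⟨_, rfl⟩ <;> simp) h
      have := key t 0 2 hext
      omega
  · -- (2,3): neither state has transitions
    refine ⟨{(2, 3)}, ?_, rfl⟩
    intro s' s'' hmem
    simp only [Set.mem_singleton_iff, Prod.mk.injEq] at hmem
    obtain ⟨rfl, rfl⟩ := hmem
    constructor
    · rintro V r'' (⟨h, _⟩ | ⟨h, _⟩) <;> omega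
    · intro V _
      left
      rintro ⟨r', ⟨h, _⟩ | ⟨h, _⟩⟩ <;> omega
  · -- no coherent simulation contains (1,3)
    rintro ⟨R, hcs, hmem⟩
    have h2 := (hcs 1 3 hmem).2 (∅ : Set ℕ)
      (by rintro ⟨r'', ⟨h, _⟩ | ⟨h, _⟩⟩ <;> omega)
    rcases h2 with h | h
    · exact h ⟨1, Or.inr ⟨rfl, rfl⟩⟩
    · -- witness trace [∅] reaches state 3, and all traces are in P
      have hext : ExtDelta ⟨ℕ, 0, fun s _ s' => (s = 0 ∧ s' = 3) ∨ (s = 1 ∧ s' = 1)⟩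
          0 ([] ++ [(∅ : Set ℕ)]) 3 :=
        ExtDelta.snoc (ExtDelta.nil _) (Or.inl ⟨rfl, rfl⟩)
      have hP : ∀ (t : List (Set ℕ)),
          ExtDelta (⟨Unit, (), fun _ _ _ => True⟩ : Transducer ℕ) () t () := by
        intro t
        induction t using List.reverseRecOn with
        | nil => exact ExtDelta.nil (T := ⟨Unit, (), fun _ _ _ => True⟩) ()
        | append_singleton t V ih => exact ExtDelta.snoc ih trivial
      exact h ([] ++ [∅]) ⟨⟨3, hext⟩, hext⟩ ⟨(), hP _⟩
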